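/- With decorated B-paths (h, h°) where h ∈ A^k_b and h° : ℕ → ℕ is finitely supported, number of peaks np(h,h°) = np(h) + Σ_i h°_i and weight wt(h,h°) = wt(h) + Σ_i i·h°_i, the generating function of decorated paths with a peaks satisfies: Ã^k_b(a) = Σ_{n=0}^a (1/(q;q)_{a−n}) · A^k_b(n), as formal power series in q. -/

import Mathlib

/-!
Decorated B-paths `(h, h°)` with `h° : ℕ →₀ ℕ` finitely supported,
`np(h,h°) = np h + Σ_i h°_i` and `wt(h,h°) = wt h + Σ_i i·h°_i`.
The generating function of decorated paths with `a` peaks satisfies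
`Ã^k_b(a) = Σ_{n=0}^a (1/(q;q)_{a−n}) · A^k_b(n)`.
-/

noncomputable def q : PowerSeries ℚ := PowerSeries.X

/-- `(q;q)_n` -/
noncomputable def poch (n : ℕ) : PowerSeries ℚ :=
  ∏ i ∈ Finset.range n, (1 - q ^ (i + 1))

def IsBPath (h : ℕ → ℕ) : Prop :=
  (∀ i, h (i + 1) ≤ h i + 1 ∧ h i ≤ h (i + 1) + 1) ∧
  (∀ i, h (i + 1) = h i → h i = 0) ∧
  (∃ L, ∀ i, L ≤ i → h i = 0)

def IsPeak (h : ℕ → ℕ) (i : ℕ) : Prop := 0 < i ∧ h (i - 1) < h i ∧ h (i + 1) < h i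

noncomputable def np (h : ℕ → ℕ) : ℕ := Set.ncard {i | IsPeak h i}

noncomputable def wt (h : ℕ → ℕ) : ℕ := ∑ᶠ i ∈ {i | IsPeak h i}, i

def memA (k b : ℕ) (h : ℕ → ℕ) : Prop := IsBPath h ∧ h 0 = b ∧ ∀ i, h i ≤ k

/-- the generating function `A^k_b(a)` of undecorated B-paths with `a` peaks -/
noncomputable def AGF (k b a : ℕ) : PowerSeries ℚ :=
  PowerSeries.mk fun N =>
    (Nat.card {h : ℕ → ℕ // memA k b h ∧ np h = a ∧ wt h = N} : ℚ)

/-- the generating function `Ã^k_b(a)` of decorated B-paths `(h, h°)` with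
`np h + Σ_i h°_i = a` peaks and deaks, weighted by `wt h + Σ_i i·h°_i` -/
noncomputable def tAGF (k b a : ℕ) : PowerSeries ℚ :=
  PowerSeries.mk fun N =>
    (Nat.card {p : (ℕ → ℕ) × (ℕ →₀ ℕ) // memA k b p.1 ∧
        np p.1 + (p.2.sum fun _ m => m) = a ∧
        wt p.1 + (p.2.sum fun i m => i * m) = N} : ℚ)

/-! ### Auxiliary lemmas on finsupps -/

private lemma fs_apply_le_sum (f : ℕ →₀ ℕ) (i : ℕ) : f i ≤ f.sum (fun _ x => x) := by
  by_cases h : i ∈ f.support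
  · exact Finset.single_le_sum (fun _ _ => Nat.zero_le _) h
  · simp [Finsupp.notMem_support_iff.mp h]

private lemma fs_mul_le_wt (f : ℕ →₀ ℕ) (i : ℕ) : i * f i ≤ f.sum (fun i x => i * x) := by
  by_cases h : i ∈ f.support
  · exact Finset.single_le_sum (f := fun i => i * f i) (fun _ _ => Nat.zero_le _) h
  · simp [Finsupp.notMem_support_iff.mp h]

private lemma finsuppSet_finite (a N : ℕ) :
    {f : ℕ →₀ ℕ | (f.sum fun _ x => x) ≤ a ∧ (f.sum fun i x => i * x) ≤ N}.Finite := by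
  apply Set.Finite.of_finite_image (f := fun f => (fun i : Fin (N+1) => f i.1))
  · apply Set.Finite.subset (Set.Finite.pi (fun _ : Fin (N+1) => Set.finite_Iic a))
    rintro g ⟨f, ⟨hs, _⟩, rfl⟩
    intro i _
    exact le_trans (fs_apply_le_sum f i.1) hs
  · rintro f1 ⟨hs1, hw1⟩ f2 ⟨hs2, hw2⟩ he
    have key : ∀ (f : ℕ →₀ ℕ), (f.sum fun i x => i * x) ≤ N → ∀ i, N < i → f i = 0 := by
      intro f hw i hi
      by_contra h0
      have h1 : i ≤ i * f i := Nat.le_mul_of_pos_right i (Nat.pos_of_ne_zero h0)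
      have := fs_mul_le_wt f i
      omega
    ext i
    by_cases hi : i < N + 1
    · exact congrFun he ⟨i, hi⟩
    · rw [key f1 hw1 i (by omega), key f2 hw2 i (by omega)]

private lemma PS_finite (m j : ℕ) :
    {f : ℕ →₀ ℕ | (f.sum fun _ x => x) = m ∧ (f.sum fun i x => i * x) = j}.Finite :=
  (finsuppSet_finite m j).subset (by rintro f ⟨h1, h2⟩; exact ⟨h1.le, h2.le⟩)

private lemma finite_PSsub (m j : ℕ) :
    Finite {f : ℕ →₀ ℕ // (f.sum fun _ x => x) = m ∧ (f.sum fun i x => i * x) = j} :=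
  (PS_finite m j).to_subtype

/-! ### Auxiliary lemmas on B-paths -/

private lemma peaks_finite (h : ℕ → ℕ) (hP : IsBPath h) : {i | IsPeak h i}.Finite := by
  obtain ⟨L, hL⟩ := hP.2.2
  apply (Set.finite_Iio L).subset
  rintro i ⟨hpos, h1, h2⟩
  by_contra hc
  have : L ≤ i := by simpa [Set.mem_Iio] using hc
  have := hL i this
  omega

private lemma peak_le_wt (h : ℕ → ℕ) (hP : IsBPath h) {i : ℕ} (hi : IsPeak h i) : i ≤ wt h := by
  have hfin := peaks_finite h hP
  rw [wt, ← Set.Finite.coe_toFinset hfin, finsum_mem_coe_finset]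
  exact Finset.single_le_sum (f := fun i => i) (fun _ _ => Nat.zero_le _)
    (hfin.mem_toFinset.mpr hi)

private lemma ascent_peak (h : ℕ → ℕ) (hP : IsBPath h) {i : ℕ} (hi : h i < h (i + 1)) :
    ∃ j, i < j ∧ IsPeak h j := by
  obtain ⟨L, hL⟩ := hP.2.2
  have hiL : i + 1 < L := by
    by_contra hc
    push_neg at hc
    have := hL (i + 1) hc
    omega
  set s : Finset ℕ := Finset.Icc (i + 1) L with hs
  have hims : i + 1 ∈ s := Finset.mem_Icc.mpr ⟨le_refl _, by omega⟩
  obtain ⟨j0, hj0, hmax⟩ := s.exists_max_image h ⟨i + 1, hims⟩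
  set M := h j0 with hM
  have hMpos : 1 ≤ M := le_trans (by omega) (hmax (i + 1) hims)
  have hub : ∀ x, i < x → h x ≤ M := by
    intro x hx
    by_cases hxL : x ≤ L
    · exact hmax x (Finset.mem_Icc.mpr ⟨by omega, hxL⟩)
    · rw [hL x (by omega)]; omega
  set s' := s.filter (fun x => h x = M) with hs'
  have hne' : s'.Nonempty := ⟨j0, Finset.mem_filter.mpr ⟨hj0, rfl⟩⟩
  set j := s'.min' hne' with hj
  have hjmem := s'.min'_mem hne'
  have hjs : j ∈ s ∧ h j = M := Finset.mem_filter.mp hjmem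
  have hij : i + 1 ≤ j := (Finset.mem_Icc.mp hjs.1).1
  have hjL : j ≤ L := (Finset.mem_Icc.mp hjs.1).2
  refine ⟨j, by omega, by omega, ?_, ?_⟩
  · rcases eq_or_lt_of_le hij with heq | hlt
    · have e : j - 1 = i := by omega
      rw [e, hjs.2]
      exact lt_of_lt_of_le hi (hmax (i + 1) hims)
    · have hmem : j - 1 ∈ s := Finset.mem_Icc.mpr ⟨by omega, by omega⟩
      have hle : h (j - 1) ≤ M := hmax _ hmem
      rcases lt_or_eq_of_le hle with h' | h'
      · rw [hjs.2]; exact h'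
      · exfalso
        have : j ≤ j - 1 := Finset.min'_le s' _ (Finset.mem_filter.mpr ⟨hmem, h'⟩)
        omega
  · have hle : h (j + 1) ≤ M := hub (j + 1) (by omega)
    rcases lt_or_eq_of_le hle with h' | h'
    · rw [hjs.2]; exact h'
    · exfalso
      have he : h (j + 1) = h j := by rw [h', hjs.2]
      have := hP.2.1 j he
      omega

private lemma zero_of_ge (h : ℕ → ℕ) (k N : ℕ) (hP : IsBPath h) (hk : ∀ i, h i ≤ k)
    (hw : wt h ≤ N) : ∀ i, N + k + 1 ≤ i → h i = 0 := by
  have hdesc : ∀ i, N ≤ i → h (i + 1) ≤ h i := by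
    intro i hNi
    by_contra hc
    push_neg at hc
    obtain ⟨j, hij, hpk⟩ := ascent_peak h hP hc
    have := peak_le_wt h hP hpk
    omega
  have key : ∀ t, h (N + t) ≤ k - t ∨ h (N + t) = 0 := by
    intro t
    induction t with
    | zero => left; simpa using hk N
    | succ t ih =>
      have hd := hdesc (N + t) (by omega)
      rw [show N + (t + 1) = N + t + 1 from rfl]
      rcases ih with ih | ih
      · by_cases h0 : h (N + t) = 0
        · right; omega
        · have hne : h (N + t + 1) ≠ h (N + t) := fun he => h0 (hP.2.1 _ he)
          left; omega
      · right; omega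
  intro i hi
  rw [show i = N + (i - N) by omega]
  rcases key (i - N) with h' | h'
  · omega
  · exact h'

private lemma paths_finite (k b N : ℕ) : {h : ℕ → ℕ | memA k b h ∧ wt h ≤ N}.Finite := by
  apply Set.Finite.of_finite_image (f := fun h => (fun i : Fin (N + k + 1) => h i.1))
  · apply Set.Finite.subset (Set.Finite.pi (fun _ : Fin (N + k + 1) => Set.finite_Iic k))
    rintro g ⟨h, ⟨⟨hP, h0, hk⟩, hw⟩, rfl⟩
    intro i _
    exact hk i.1
  · rintro h1 ⟨⟨hP1, h01, hk1⟩, hw1⟩ h2 ⟨⟨hP2, h02, hk2⟩, hw2⟩ he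
    funext i
    by_cases hi : i < N + k + 1
    · exact congrFun he ⟨i, hi⟩
    · rw [zero_of_ge h1 k N hP1 hk1 hw1 i (by omega),
        zero_of_ge h2 k N hP2 hk2 hw2 i (by omega)]

private lemma DS_finite (k b a N : ℕ) :
    {p : (ℕ → ℕ) × (ℕ →₀ ℕ) | memA k b p.1 ∧
        np p.1 + (p.2.sum fun _ m => m) = a ∧
        wt p.1 + (p.2.sum fun i m => i * m) = N}.Finite := by
  apply Set.Finite.subset ((paths_finite k b N).prod (finsuppSet_finite a N))
  rintro ⟨h, f⟩ ⟨hm, hnp, hwt⟩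
  simp only [Set.mem_prod, Set.mem_setOf_eq]
  dsimp only at hm hnp hwt
  exact ⟨⟨hm, by omega⟩, by omega, by omega⟩

/-! ### The partition generating function -/

noncomputable def cPS (m j : ℕ) : ℕ :=
  Nat.card {f : ℕ →₀ ℕ // (f.sum fun _ x => x) = m ∧ (f.sum fun i x => i * x) = j}

private lemma sum_eq_zero_imp (f : ℕ →₀ ℕ) (h : f.sum (fun _ x => x) = 0) : f = 0 := by
  ext i
  have hle := fs_apply_le_sum f i
  simp only [Finsupp.coe_zero, Pi.zero_apply]
  omega

private lemma cPS_zero (j : ℕ) : cPS 0 j = if j = 0 then 1 else 0 := by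
  unfold cPS
  split_ifs with hj
  · subst hj
    haveI : Unique {f : ℕ →₀ ℕ // (f.sum fun _ x => x) = 0 ∧ (f.sum fun i x => i * x) = 0} :=
      { default := ⟨0, by simp⟩
        uniq := fun f => Subtype.ext (sum_eq_zero_imp f.1 f.2.1) }
    exact Nat.card_unique
  · haveI : IsEmpty {f : ℕ →₀ ℕ // (f.sum fun _ x => x) = 0 ∧ (f.sum fun i x => i * x) = j} := by
      constructor
      rintro ⟨f, h1, h2⟩
      apply hj
      rw [← h2, sum_eq_zero_imp f h1]
      simp
    exact Nat.card_of_isEmpty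

private def se : ℕ ↪ ℕ := ⟨Nat.succ, Nat.succ_injective⟩

private lemma sum_add_single (f : ℕ →₀ ℕ) :
    ((f + Finsupp.single 0 1).sum fun _ x => x) = (f.sum fun _ x => x) + 1 := by
  rw [Finsupp.sum_add_index' (fun _ => rfl) (fun _ _ _ => rfl), Finsupp.sum_single_index rfl]

private lemma wt_add_single (f : ℕ →₀ ℕ) :
    ((f + Finsupp.single 0 1).sum fun i x => i * x) = f.sum fun i x => i * x := by
  rw [Finsupp.sum_add_index' (fun a => mul_zero a) (fun a b c => mul_add a b c),
    Finsupp.sum_single_index (mul_zero 0)]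
  simp

private lemma sum_emb (g : ℕ →₀ ℕ) :
    ((Finsupp.embDomain se g).sum fun _ x => x) = g.sum fun _ x => x :=
  Finsupp.sum_embDomain

private lemma wt_emb (g : ℕ →₀ ℕ) :
    ((Finsupp.embDomain se g).sum fun i x => i * x)
      = (g.sum fun i x => i * x) + (g.sum fun _ x => x) := by
  rw [Finsupp.sum_embDomain]
  rw [show (fun (a : ℕ) (b : ℕ) => se a * b) = fun a b => a * b + b by
    funext a b; show (a + 1) * b = _; ring]
  exact Finsupp.sum_add

private lemma emb_zero (g : ℕ →₀ ℕ) : Finsupp.embDomain se g 0 = 0 :=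
  Finsupp.embDomain_notin_range _ _ _ (by simp [se, Set.mem_range, Nat.succ_ne_zero])

private lemma emb_comap (F : ℕ →₀ ℕ) (hF0 : F 0 = 0) :
    Finsupp.embDomain se (Finsupp.comapDomain Nat.succ F Nat.succ_injective.injOn) = F := by
  ext i
  cases i with
  | zero => rw [emb_zero]; exact hF0.symm
  | succ i =>
    rw [show (i + 1 : ℕ) = se i from rfl, Finsupp.embDomain_apply_self,
      Finsupp.comapDomain_apply]
    rfl

private noncomputable def psi (m j : ℕ) (hle : m + 1 ≤ j) :
    ({f : ℕ →₀ ℕ // (f.sum fun _ x => x) = m ∧ (f.sum fun i x => i * x) = j} ⊕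
      {g : ℕ →₀ ℕ // (g.sum fun _ x => x) = m + 1 ∧
        (g.sum fun i x => i * x) = j - (m + 1)}) →
      {f : ℕ →₀ ℕ // (f.sum fun _ x => x) = m + 1 ∧ (f.sum fun i x => i * x) = j} :=
  fun x => Sum.elim
    (fun f => ⟨f.1 + Finsupp.single 0 1, by
      rw [sum_add_single, wt_add_single, f.2.1, f.2.2]; exact ⟨rfl, rfl⟩⟩)
    (fun g => ⟨Finsupp.embDomain se g.1, by
      rw [sum_emb, wt_emb, g.2.1, g.2.2]
      exact ⟨rfl, by omega⟩⟩)
    x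

private lemma psi_inj (m j : ℕ) (hle : m + 1 ≤ j) : Function.Injective (psi m j hle) := by
  rintro (f1 | g1) (f2 | g2) he
  · have h := congrArg Subtype.val he
    simp only [psi, Sum.elim_inl] at h
    exact congrArg Sum.inl (Subtype.ext (add_right_cancel h))
  · exfalso
    have h := congrArg (fun x => x.val 0) he
    simp only [psi, Sum.elim_inl, Sum.elim_inr, Finsupp.add_apply,
      Finsupp.single_apply, emb_zero] at h
    norm_num at h
  · exfalso
    have h := congrArg (fun x => x.val 0) he
    simp only [psi, Sum.elim_inl, Sum.elim_inr, Finsupp.add_apply,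
      Finsupp.single_apply, emb_zero] at h
    norm_num at h
  · have h := congrArg Subtype.val he
    simp only [psi, Sum.elim_inr] at h
    exact congrArg Sum.inr (Subtype.ext (Finsupp.embDomain_injective se h))

private lemma cPS_succ_le (m j : ℕ) (hle : m + 1 ≤ j) :
    cPS (m + 1) j = cPS m j + cPS (m + 1) (j - (m + 1)) := by
  haveI := finite_PSsub m j
  haveI := finite_PSsub (m + 1) (j - (m + 1))
  rw [cPS, cPS, cPS, ← Nat.card_sum]
  apply Nat.card_congr
  apply (Equiv.ofBijective (psi m j hle) ⟨psi_inj m j hle, ?_⟩).symm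
  rintro ⟨F, hs, hw⟩
  by_cases hF0 : F 0 = 0
  · set g := Finsupp.comapDomain Nat.succ F Nat.succ_injective.injOn with hg
    have hemb := emb_comap F hF0
    have hgs : (g.sum fun _ x => x) = m + 1 := by rw [← hs, ← hemb, sum_emb]
    have hgw : (g.sum fun i x => i * x) = j - (m + 1) := by
      have hh := wt_emb g
      rw [hemb, hw, hgs] at hh
      omega
    exact ⟨Sum.inr ⟨g, hgs, hgw⟩, Subtype.ext hemb⟩
  · have hsle : Finsupp.single 0 1 ≤ F := Finsupp.single_le_iff.mpr (by omega)
    set f := F - Finsupp.single 0 1 with hf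
    have hfe : f + Finsupp.single 0 1 = F := tsub_add_cancel_of_le hsle
    have hfs : (f.sum fun _ x => x) = m := by
      have hh := sum_add_single f; rw [hfe, hs] at hh; omega
    have hfw : (f.sum fun i x => i * x) = j := by
      have hh := wt_add_single f; rw [hfe, hw] at hh; omega
    exact ⟨Sum.inl ⟨f, hfs, hfw⟩, Subtype.ext hfe⟩

private lemma cPS_succ_lt (m j : ℕ) (hlt : j < m + 1) : cPS (m + 1) j = cPS m j := by
  rw [cPS, cPS]
  apply Nat.card_congr
  apply Equiv.symm
  refine Equiv.ofBijective (fun f => ⟨f.1 + Finsupp.single 0 1, by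
    rw [sum_add_single, wt_add_single, f.2.1, f.2.2]; exact ⟨rfl, rfl⟩⟩) ⟨?_, ?_⟩
  · intro f1 f2 he
    have h := congrArg Subtype.val he
    simp only at h
    exact Subtype.ext (add_right_cancel h)
  · rintro ⟨F, hs, hw⟩
    by_cases hF0 : F 0 = 0
    · exfalso
      set g := Finsupp.comapDomain Nat.succ F Nat.succ_injective.injOn with hg
      have hemb := emb_comap F hF0
      have hgs : (g.sum fun _ x => x) = m + 1 := by rw [← hs, ← hemb, sum_emb]
      have hh := wt_emb g
      rw [hemb, hw, hgs] at hh
      omega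
    · have hsle : Finsupp.single 0 1 ≤ F := Finsupp.single_le_iff.mpr (by omega)
      have hfe : F - Finsupp.single 0 1 + Finsupp.single 0 1 = F := tsub_add_cancel_of_le hsle
      have hfs : ((F - Finsupp.single 0 1).sum fun _ x => x) = m := by
        have hh := sum_add_single (F - Finsupp.single 0 1); rw [hfe, hs] at hh; omega
      have hfw : ((F - Finsupp.single 0 1).sum fun i x => i * x) = j := by
        have hh := wt_add_single (F - Finsupp.single 0 1); rw [hfe, hw] at hh; omega
      exact ⟨⟨F - Finsupp.single 0 1, hfs, hfw⟩, Subtype.ext hfe⟩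

private noncomputable def P (m : ℕ) : PowerSeries ℚ := PowerSeries.mk fun j => (cPS m j : ℚ)

private lemma P_zero : P 0 = 1 := by
  ext j
  simp only [P, PowerSeries.coeff_mk, cPS_zero, PowerSeries.coeff_one]
  split_ifs <;> simp

private lemma P_step (m : ℕ) : (1 - q ^ (m + 1)) * P (m + 1) = P m := by
  ext j
  rw [sub_mul, one_mul, map_sub]
  simp only [q]
  rw [PowerSeries.coeff_X_pow_mul']
  simp only [P, PowerSeries.coeff_mk]
  by_cases hle : m + 1 ≤ j
  · rw [if_pos hle, cPS_succ_le m j hle]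
    push_cast
    ring
  · rw [if_neg hle, cPS_succ_lt m j (by omega)]
    push_cast
    ring

private lemma poch_mul_P (m : ℕ) : poch m * P m = 1 := by
  induction m with
  | zero => rw [show poch 0 = 1 by simp [poch], one_mul, P_zero]
  | succ m ih =>
    have hp : poch (m + 1) = poch m * (1 - q ^ (m + 1)) := by
      simp only [poch, Finset.prod_range_succ]
    rw [hp, mul_assoc, P_step, ih]

private lemma poch_inv (m : ℕ) : (poch m)⁻¹ = P m := by
  have hc : PowerSeries.constantCoeff (poch m) ≠ 0 := by
    have h1 : PowerSeries.constantCoeff (poch m) = 1 := by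
      simp only [poch, map_prod, map_sub, map_one, map_pow, q,
        PowerSeries.constantCoeff_X]
      simp
    rw [h1]
    exact one_ne_zero
  symm
  rw [PowerSeries.eq_inv_iff_mul_eq_one hc, mul_comm]
  exact poch_mul_P m

private lemma fiber_card (k b a N : ℕ)
    (hfin : {p : (ℕ → ℕ) × (ℕ →₀ ℕ) | memA k b p.1 ∧
        np p.1 + (p.2.sum fun _ m => m) = a ∧
        wt p.1 + (p.2.sum fun i m => i * m) = N}.Finite)
    (n j w : ℕ) (hn : n ≤ a) (hjw : j + w = N) :
    (hfin.toFinset.filter fun p => (np p.1, (N - wt p.1, wt p.1)) = (n, (j, w))).card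
      = cPS (a - n) j * Nat.card {h : ℕ → ℕ // memA k b h ∧ np h = n ∧ wt h = w} := by
  have hchar : ∀ p : (ℕ → ℕ) × (ℕ →₀ ℕ),
      (p ∈ hfin.toFinset.filter fun p => (np p.1, (N - wt p.1, wt p.1)) = (n, (j, w))) ↔
        ((memA k b p.1 ∧ np p.1 = n ∧ wt p.1 = w) ∧
          ((p.2.sum fun _ x => x) = a - n ∧ (p.2.sum fun i x => i * x) = j)) := by
    intro p
    rw [Finset.mem_filter, Set.Finite.mem_toFinset, Set.mem_setOf_eq, Prod.mk.injEq,
      Prod.mk.injEq]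
    constructor
    · rintro ⟨⟨hm, hnp, hwt⟩, hn', hj', hw'⟩
      exact ⟨⟨hm, hn', hw'⟩, by omega, by omega⟩
    · rintro ⟨⟨hm, hnp, hwt⟩, hs, hj'⟩
      exact ⟨⟨hm, by omega, by omega⟩, hnp, by omega, hwt⟩
  rw [← Nat.card_eq_finsetCard, cPS, ← Nat.card_prod]
  apply Nat.card_congr
  refine Equiv.trans (Equiv.subtypeEquivRight hchar) ?_
  exact
    { toFun := fun p => (⟨p.1.2, p.2.2⟩, ⟨p.1.1, p.2.1⟩)
      invFun := fun x => ⟨(x.2.1, x.1.1), x.2.2, x.1.2⟩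
      left_inv := fun p => rfl
      right_inv := fun x => rfl }

theorem tAGF_eq_sum_AGF (k b a : ℕ) (hb : b ≤ k) :
    tAGF k b a = ∑ n ∈ Finset.range (a + 1), (poch (a - n))⁻¹ * AGF k b n := by
  ext N
  rw [map_sum]
  have hR : ∀ n ∈ Finset.range (a + 1),
      (PowerSeries.coeff N) ((poch (a - n))⁻¹ * AGF k b n)
        = ∑ jw ∈ Finset.HasAntidiagonal.antidiagonal N,
            (cPS (a - n) jw.1 : ℚ) *
              (Nat.card {h : ℕ → ℕ // memA k b h ∧ np h = n ∧ wt h = jw.2} : ℚ) := by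
    intro n _
    rw [poch_inv, PowerSeries.coeff_mul]
    apply Finset.sum_congr rfl
    intro jw _
    simp only [P, AGF, PowerSeries.coeff_mk]
  rw [Finset.sum_congr rfl hR]
  simp only [tAGF, PowerSeries.coeff_mk]
  have hfin := DS_finite k b a N
  have hcard : (Nat.card {p : (ℕ → ℕ) × (ℕ →₀ ℕ) // memA k b p.1 ∧
        np p.1 + (p.2.sum fun _ m => m) = a ∧
        wt p.1 + (p.2.sum fun i m => i * m) = N}) = hfin.toFinset.card :=
    Nat.card_eq_card_finite_toFinset hfin
  rw [hcard]
  have hmem : ∀ p ∈ hfin.toFinset, (np p.1, (N - wt p.1, wt p.1)) ∈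
      Finset.range (a + 1) ×ˢ Finset.HasAntidiagonal.antidiagonal N := by
    intro p hp
    rw [Set.Finite.mem_toFinset] at hp
    obtain ⟨hm, hnp, hwt⟩ := hp
    simp only [Finset.mem_product, Finset.mem_range, Finset.HasAntidiagonal.mem_antidiagonal]
    exact ⟨by omega, by omega⟩
  rw [Finset.card_eq_sum_card_fiberwise hmem, Nat.cast_sum, Finset.sum_product]
  apply Finset.sum_congr rfl
  intro n hn
  apply Finset.sum_congr rfl
  intro jw hjw
  rw [Finset.mem_range] at hn
  rw [Finset.HasAntidiagonal.mem_antidiagonal] at hjw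
  obtain ⟨j, w⟩ := jw
  rw [fiber_card k b a N hfin n j w (by omega) hjw]
  push_cast
  ring
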